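/- Let f : ℝ^{m×n} → ℝ be convex and differentiable with gradient ∇f, let β > 0 and ε ≥ 0, and let (x*, λ*) satisfy Πx* = 0 and ∇f(x*) + Πλ* = 0. Suppose x ∈ ℝ^{m×n} is an ε-accurate solution of the penalized problem, i.e. f(x) + (β/2)‖Πx‖²_F ≤ inf_{y ∈ ℝ^{m×n}} [ f(y) + (β/2)‖Πy‖²_F ] + ε. Then ‖Πx‖_F ≤ 2‖λ*‖_F/β + √(2ε/β), and −‖λ*‖_F·‖Πx‖_F ≤ f(x) − f(x*) ≤ ε. -/

import Mathlib

open scoped RealInnerProductSpace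

/-- The column-average operator `x ↦ (1/m)·1 1ᵀ x` on `ℝ^{m×n}`
(viewed as a Euclidean space with the Frobenius inner product). -/
noncomputable def colAvg (m n : ℕ) (x : EuclideanSpace ℝ (Fin m × Fin n)) :
    EuclideanSpace ℝ (Fin m × Fin n) :=
  WithLp.toLp 2 (fun p : Fin m × Fin n => (m : ℝ)⁻¹ * ∑ k : Fin m, x (k, p.2))

/-- The operator `Π = I − (1/m)·1 1ᵀ` acting on `ℝ^{m×n}`. -/
noncomputable def cProj (m n : ℕ) (x : EuclideanSpace ℝ (Fin m × Fin n)) :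
    EuclideanSpace ℝ (Fin m × Fin n) :=
  x - colAvg m n x

lemma colAvg_inner (m n : ℕ) (a b : EuclideanSpace ℝ (Fin m × Fin n)) :
    ⟪colAvg m n a, b⟫ = ⟪a, colAvg m n b⟫ := by
  have key : ∀ c d : EuclideanSpace ℝ (Fin m × Fin n),
      ⟪colAvg m n c, d⟫ = (m : ℝ)⁻¹ *
        ∑ j : Fin n, (∑ k : Fin m, c (k, j)) * (∑ i : Fin m, d (i, j)) := by
    intro c d
    simp only [PiLp.inner_apply, RCLike.inner_apply, conj_trivial, colAvg, PiLp.toLp_apply]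
    rw [Fintype.sum_prod_type, Finset.sum_comm, Finset.mul_sum]
    refine Finset.sum_congr rfl fun j _ => ?_
    dsimp only
    rw [← Finset.sum_mul]
    ring
  have key2 : ∀ c d : EuclideanSpace ℝ (Fin m × Fin n),
      ⟪c, colAvg m n d⟫ = (m : ℝ)⁻¹ *
        ∑ j : Fin n, (∑ k : Fin m, c (k, j)) * (∑ i : Fin m, d (i, j)) := by
    intro c d
    rw [real_inner_comm, key]
    congr 1
    exact Finset.sum_congr rfl fun j _ => mul_comm _ _
  rw [key, key2]

lemma cProj_sub (m n : ℕ) (a b : EuclideanSpace ℝ (Fin m × Fin n)) :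
    cProj m n (a - b) = cProj m n a - cProj m n b := by
  ext p
  simp only [cProj, colAvg, PiLp.sub_apply, PiLp.toLp_apply]
  rw [Finset.sum_sub_distrib]
  ring

lemma tangent_le (m n : ℕ) (f : EuclideanSpace ℝ (Fin m × Fin n) → ℝ)
    (hconv : ConvexOn ℝ Set.univ f) (g a b : EuclideanSpace ℝ (Fin m × Fin n))
    (hg : HasGradientAt f g a) : f a + ⟪g, b - a⟫ ≤ f b := by
  set c : ℝ → EuclideanSpace ℝ (Fin m × Fin n) := fun t => a + t • (b - a) with hc
  have hcd : HasDerivAt c (b - a) 0 := by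
    simpa [hc] using ((hasDerivAt_id (0 : ℝ)).smul_const (b - a)).const_add a
  have hder : HasDerivAt (f ∘ c) ⟪g, b - a⟫ 0 := by
    have h1 : HasFDerivAt f (InnerProductSpace.toDual ℝ _ g) a := hg
    have h1' : HasFDerivAt f (InnerProductSpace.toDual ℝ _ g) (a + (0:ℝ) • (b - a)) := by
      simpa using h1
    have h2 := h1'.comp_hasDerivAt 0 hcd
    simpa using h2
  have hconv' : ConvexOn ℝ Set.univ (f ∘ c) := by
    have h := hconv.comp_affineMap (AffineMap.lineMap a b : ℝ →ᵃ[ℝ] _)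
    have heq : f ∘ c = f ∘ (AffineMap.lineMap a b : ℝ →ᵃ[ℝ] _) := by
      funext t
      simp [hc, AffineMap.lineMap_apply, add_comm]
    rw [heq]
    simpa using h
  have := hconv'.le_slope_of_hasDerivAt (Set.mem_univ (0:ℝ)) (Set.mem_univ (1:ℝ))
    one_pos hder
  rw [slope_def_field] at this
  have hc1 : c 1 = b := by simp [hc]
  have hc0 : c 0 = a := by simp [hc]
  simp only [Function.comp_apply, hc0, hc1, sub_zero, div_one] at this
  linarith

lemma cProj_inner (m n : ℕ) (a b : EuclideanSpace ℝ (Fin m × Fin n)) :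
    ⟪cProj m n a, b⟫ = ⟪a, cProj m n b⟫ := by
  simp only [cProj, inner_sub_left, inner_sub_right, colAvg_inner]

set_option maxHeartbeats 1000000 in
theorem stmt12 (m n : ℕ) (hm : 0 < m)
    (f : EuclideanSpace ℝ (Fin m × Fin n) → ℝ)
    (gf : EuclideanSpace ℝ (Fin m × Fin n) → EuclideanSpace ℝ (Fin m × Fin n))
    (hconv : ConvexOn ℝ Set.univ f)
    (hgrad : ∀ x, HasGradientAt f (gf x) x)
    (β ε : ℝ) (hβ : 0 < β) (hε : 0 ≤ ε)
    (xs lam : EuclideanSpace ℝ (Fin m × Fin n))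
    (hxs : cProj m n xs = 0) (hlam : gf xs + cProj m n lam = 0)
    (x : EuclideanSpace ℝ (Fin m × Fin n))
    -- `x` is an `ε`-accurate solution of the penalized problem
    (hx : ∀ y, f x + (β / 2) * ‖cProj m n x‖ ^ 2 ≤ f y + (β / 2) * ‖cProj m n y‖ ^ 2 + ε) :
    ‖cProj m n x‖ ≤ 2 * ‖lam‖ / β + Real.sqrt (2 * ε / β) ∧
    -‖lam‖ * ‖cProj m n x‖ ≤ f x - f xs ∧
    f x - f xs ≤ ε := by
  set t : ℝ := ‖cProj m n x‖ with ht
  have ht0 : 0 ≤ t := norm_nonneg _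
  have hL0 : (0:ℝ) ≤ ‖lam‖ := norm_nonneg _
  have h2 : f x + (β / 2) * t ^ 2 ≤ f xs + ε := by
    have h := hx xs
    rw [hxs, norm_zero] at h
    linarith
  have ht2 : (0:ℝ) ≤ (β / 2) * t ^ 2 := by positivity
  have hub : f x - f xs ≤ ε := by linarith
  -- gradient inequality
  have hgfxs : gf xs = -(cProj m n lam) := eq_neg_of_add_eq_zero_left hlam
  have htan := tangent_le m n f hconv (gf xs) xs x (hgrad xs)
  have hinner : ⟪gf xs, x - xs⟫ = -⟪lam, cProj m n x⟫ := by
    rw [hgfxs, inner_neg_left, cProj_inner, cProj_sub, hxs, sub_zero]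
  have hcs : ⟪lam, cProj m n x⟫ ≤ ‖lam‖ * t := by
    have := real_inner_le_norm lam (cProj m n x)
    linarith [this]
  have hlow : -‖lam‖ * t ≤ f x - f xs := by
    rw [hinner] at htan
    nlinarith [real_inner_le_norm lam (cProj m n x),
      abs_real_inner_le_norm lam (cProj m n x), abs_le.1 (abs_real_inner_le_norm lam (cProj m n x))]
  refine ⟨?_, hlow, hub⟩
  -- quadratic bound
  set s : ℝ := Real.sqrt (2 * ε / β) with hs
  have hs0 : 0 ≤ s := Real.sqrt_nonneg _
  have hs2 : s ^ 2 = 2 * ε / β := Real.sq_sqrt (by positivity)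
  have hβs : β * s ^ 2 = 2 * ε := by
    rw [hs2]; field_simp
  have hq : (β / 2) * t ^ 2 ≤ ε + ‖lam‖ * t := by
    rw [hinner] at htan
    linarith
  by_contra hcon
  push_neg at hcon
  have hd0 : (0:ℝ) ≤ 2 * ‖lam‖ / β := by positivity
  have h5 : s ≤ t := by linarith
  have h6 : 0 < t := by linarith
  have h4 : 2 * ‖lam‖ + β * s < β * t := by
    have hmul := mul_lt_mul_of_pos_left hcon hβ
    have hx2 : β * (2 * ‖lam‖ / β) = 2 * ‖lam‖ := by field_simp
    nlinarith [hmul, hx2]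
  have h7 : t * (2 * ‖lam‖ + β * s) < t * (β * t) := (mul_lt_mul_iff_right₀ h6).2 h4
  have h8 : β * s * s ≤ β * s * t := mul_le_mul_of_nonneg_left h5 (mul_nonneg hβ.le hs0)
  nlinarith [h7, h8, hq, hβs]
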